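/- Let n≥1 and s∈(0,n]. There is a constant c=c(n,s)>0 such that the following holds. Let 0<δ<1/2 and C>0, and let A⊆ℝⁿ be a (δ,s,C)-Frostman set. Then there exists A′⊆A which is a (δ,s,100)-Katz-Tao set and satisfies 𝓔_δ(A′) ≥ c·δ^{−s}·(log(1/δ))^{−1}·C^{−1}. -/

import Mathlib

open MeasureTheory Metric Set
open scoped ENNReal

noncomputable section

abbrev EN (n : ℕ) := EuclideanSpace ℝ (Fin n)

/-- The `δ`-covering number of `X` (valued in `ℝ≥0∞`): the least number of balls of
radius `δ` needed to cover `X`. -/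
def covNum {n : ℕ} (δ : ℝ) (X : Set (EN n)) : ℝ≥0∞ :=
  ⨅ (S : Finset (EN n)) (_ : X ⊆ ⋃ x ∈ S, closedBall x δ), (S.card : ℝ≥0∞)

/-- `A` is a `(δ,s,C)`-Katz-Tao set. -/
def IsKatzTao {n : ℕ} (δ s C : ℝ) (A : Set (EN n)) : Prop :=
  A.Nonempty ∧ Bornology.IsBounded A ∧
  ∀ x : EN n, ∀ r : ℝ, δ ≤ r → r ≤ 1 →
    covNum δ (A ∩ closedBall x r) ≤ ENNReal.ofReal (C * (r / δ) ^ s)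

/-- `A` is a `(δ,s,C)`-Frostman set. -/
def IsFrostman {n : ℕ} (δ s C : ℝ) (A : Set (EN n)) : Prop :=
  A.Nonempty ∧ Bornology.IsBounded A ∧
  ∀ x : EN n, ∀ r : ℝ, δ ≤ r → r ≤ 1 →
    covNum δ (A ∩ closedBall x r) ≤ ENNReal.ofReal (C * r ^ s) * covNum δ A

namespace Statement16Aux

open scoped Classical

variable {n : ℕ}

lemma covNum_le_card {δ : ℝ} {X : Set (EN n)} (S : Finset (EN n))
    (h : X ⊆ ⋃ x ∈ S, closedBall x δ) : covNum δ X ≤ S.card := iInf₂_le S h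

lemma one_le_covNum {δ : ℝ} {X : Set (EN n)} (hX : X.Nonempty) : 1 ≤ covNum δ X := by
  refine le_iInf₂ fun S hS => ?_
  obtain ⟨x, hx⟩ := hX
  have := hS hx
  simp only [Set.mem_iUnion] at this
  obtain ⟨y, hy, -⟩ := this
  exact_mod_cast Nat.one_le_cast.mpr (Finset.card_pos.mpr ⟨y, hy⟩)

/-- a set of pairwise `> 2δ`-separated points needs as many `δ`-balls as points -/
lemma card_le_card_of_cover {δ : ℝ} {Q S : Finset (EN n)}
    (hsep : ∀ p ∈ Q, ∀ q ∈ Q, p ≠ q → 2 * δ < dist p q)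
    (hcov : (↑Q : Set (EN n)) ⊆ ⋃ x ∈ S, closedBall x δ) : Q.card ≤ S.card := by
  by_contra hlt
  push_neg at hlt
  have hf : ∀ p : EN n, ∃ y : EN n, p ∈ Q → y ∈ S ∧ p ∈ closedBall y δ := by
    intro p
    by_cases hp : p ∈ Q
    · have := hcov hp
      simp only [Set.mem_iUnion] at this
      obtain ⟨y, hy, hmem⟩ := this
      exact ⟨y, fun _ => ⟨hy, hmem⟩⟩
    · exact ⟨0, fun h => absurd h hp⟩
  choose f hf using hf
  obtain ⟨p, hp, q, hq, hne, heq⟩ :=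
    Finset.exists_ne_map_eq_of_card_lt_of_maps_to hlt (fun p hp => (hf p hp).1)
  have h1 := (hf p hp).2
  have h2 := (hf q hq).2
  rw [mem_closedBall] at h1 h2
  have := hsep p hp q hq hne
  have hd : dist p q ≤ 2 * δ := by
    calc dist p q ≤ dist p (f p) + dist q (f q) := by
          rw [heq]; exact dist_triangle_right _ _ _
    _ ≤ 2 * δ := by linarith
  linarith

/-- lower bound for covNum via separated subsets -/
lemma card_le_covNum {δ : ℝ} {Q : Finset (EN n)} {X : Set (EN n)}
    (hsep : ∀ p ∈ Q, ∀ q ∈ Q, p ≠ q → 2 * δ < dist p q)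
    (hQX : (↑Q : Set (EN n)) ⊆ X) : (Q.card : ℝ≥0∞) ≤ covNum δ X := by
  refine le_iInf₂ fun S hS => ?_
  exact_mod_cast card_le_card_of_cover hsep (hQX.trans hS)

/-- volume packing: `> r`-separated points in a ball of radius `R` are few -/
lemma card_le_of_separated_in_ball {r R : ℝ} (hr : 0 < r) (hR : 0 ≤ R) {x : EN n}
    {Q : Finset (EN n)} (hQ : ∀ p ∈ Q, p ∈ closedBall x R)
    (hsep : ∀ p ∈ Q, ∀ q ∈ Q, p ≠ q → r < dist p q) :
    (Q.card : ℝ) ≤ ((2 * R + 2 * r) / r) ^ n := by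
  set μ : Measure (EN n) := volume
  have hdisj : (↑Q : Set (EN n)).PairwiseDisjoint (fun p => ball p (r / 2)) := by
    intro p hp q hq hne
    refine Set.disjoint_left.mpr fun z hzp hzq => ?_
    rw [mem_ball] at hzp hzq
    have := hsep p hp q hq hne
    have : dist p q ≤ dist z p + dist z q := dist_triangle_left _ _ _
    linarith
  have hsub : (⋃ p ∈ Q, ball p (r / 2)) ⊆ closedBall x (R + r) := by
    refine Set.iUnion₂_subset fun p hp => ?_
    refine (ball_subset_closedBall).trans (closedBall_subset_closedBall' ?_)
    have := hQ p hp; rw [mem_closedBall] at this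
    linarith
  have hvol : ∑ p ∈ Q, μ (ball p (r / 2)) ≤ μ (closedBall x (R + r)) := by
    rw [← measure_biUnion_finset hdisj (fun p _ => measurableSet_ball)]
    exact measure_mono hsub
  have hball : ∀ p : EN n, μ (ball p (r / 2)) =
      ENNReal.ofReal ((r / 2) ^ n) * μ (ball 0 1) := by
    intro p
    rw [Measure.addHaar_ball_of_pos μ p (by linarith)]
    simp [finrank_euclideanSpace_fin]
  have hbig : μ (closedBall x (R + r)) =
      ENNReal.ofReal ((R + r) ^ n) * μ (ball 0 1) := by
    rw [Measure.addHaar_closedBall μ x (by linarith)]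
    simp [finrank_euclideanSpace_fin]
  simp only [hball, Finset.sum_const, nsmul_eq_mul, hbig] at hvol
  have hv0 : μ (ball (0 : EN n) 1) ≠ 0 := (measure_ball_pos _ _ one_pos).ne'
  have hvt : μ (ball (0 : EN n) 1) ≠ ⊤ := measure_ball_lt_top.ne
  have hkey : (Q.card : ℝ≥0∞) * ENNReal.ofReal ((r / 2) ^ n) ≤ ENNReal.ofReal ((R + r) ^ n) := by
    rw [← ENNReal.mul_le_mul_iff_left hv0 hvt]
    calc (Q.card : ℝ≥0∞) * ENNReal.ofReal ((r / 2) ^ n) * μ (ball 0 1)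
        = (Q.card : ℝ≥0∞) * (ENNReal.ofReal ((r / 2) ^ n) * μ (ball 0 1)) := by ring
      _ ≤ _ := hvol
  have h2 : ENNReal.ofReal ((Q.card : ℝ) * (r / 2) ^ n) ≤ ENNReal.ofReal ((R + r) ^ n) := by
    rwa [ENNReal.ofReal_mul (by positivity), ENNReal.ofReal_natCast]
  rw [ENNReal.ofReal_le_ofReal_iff (by positivity)] at h2
  have hrn : (0:ℝ) < (r / 2) ^ n := by positivity
  have h3 : (Q.card : ℝ) ≤ (R + r) ^ n / (r / 2) ^ n := (le_div_iff₀ hrn).mpr h2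
  have h4 : ((2 * R + 2 * r) / r : ℝ) ^ n = (R + r) ^ n / (r / 2) ^ n := by
    rw [← div_pow]
    congr 1
    field_simp
  rw [h4]; exact h3

/-- Existence of a maximal `> ε`-separated finite subset of a bounded set -/
lemma exists_maximal_separated {X : Set (EN n)} (hX : Bornology.IsBounded X) {ε : ℝ}
    (hε : 0 < ε) :
    ∃ P : Finset (EN n), (↑P : Set (EN n)) ⊆ X ∧
      (∀ p ∈ P, ∀ q ∈ P, p ≠ q → ε < dist p q) ∧
      X ⊆ ⋃ p ∈ P, closedBall p ε := by
  rcases X.eq_empty_or_nonempty with rfl | ⟨x₀, hx₀⟩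
  · exact ⟨∅, by simp, by simp, by simp⟩
  obtain ⟨R, hRX⟩ := hX.subset_closedBall x₀
  have hR0 : 0 ≤ max R 0 := le_max_right _ _
  have hRX' : X ⊆ closedBall x₀ (max R 0) :=
    hRX.trans (closedBall_subset_closedBall (le_max_left _ _))
  set T : Set ℕ := {k | ∃ P : Finset (EN n), (↑P : Set (EN n)) ⊆ X ∧
      (∀ p ∈ P, ∀ q ∈ P, p ≠ q → ε < dist p q) ∧ P.card = k} with hT
  have hT0 : 0 ∈ T := ⟨∅, by simp, by simp, rfl⟩
  have hTbdd : BddAbove T := by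
    refine ⟨Nat.ceil (((2 * (max R 0) + 2 * ε) / ε) ^ n), fun k hk => ?_⟩
    obtain ⟨P, hPX, hPsep, rfl⟩ := hk
    have := card_le_of_separated_in_ball hε hR0 (x := x₀)
      (fun p hp => hRX' (hPX hp)) hPsep
    calc P.card = Nat.ceil ((P.card : ℝ)) := (Nat.ceil_natCast _).symm
      _ ≤ _ := Nat.ceil_le_ceil this
  have hmem : sSup T ∈ T := Nat.sSup_mem ⟨0, hT0⟩ hTbdd
  obtain ⟨P, hPX, hPsep, hPcard⟩ := hmem
  refine ⟨P, hPX, hPsep, fun y hy => ?_⟩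
  by_contra hyc
  simp only [Set.mem_iUnion, mem_closedBall, not_exists] at hyc
  push_neg at hyc
  have hysep : ∀ p ∈ P, ε < dist y p := fun p hp => hyc p hp
  have hyP : y ∉ P := fun h => by
    have := hysep y h; simp at this; linarith
  have hins : P.card + 1 ∈ T := by
    refine ⟨insert y P, ?_, ?_, ?_⟩
    · intro z hz
      simp only [Finset.coe_insert, Set.mem_insert_iff] at hz
      rcases hz with rfl | hz
      · exact hy
      · exact hPX hz
    · intro p hp q hq hne
      simp only [Finset.mem_insert] at hp hq
      rcases hp with rfl | hp
      · rcases hq with rfl | hq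
        · exact absurd rfl hne
        · exact hysep q hq
      · rcases hq with rfl | hq
        · rw [dist_comm]; exact hysep p hp
        · exact hPsep p hp q hq hne
    · rw [Finset.card_insert_of_notMem hyP]
  have := le_csSup hTbdd hins
  omega

lemma exists_cover_closedBall {ε R : ℝ} (hε : 0 < ε) (hR : 0 ≤ R) (x : EN n) :
    ∃ U : Finset (EN n), (U.card : ℝ) ≤ ((2 * R + 2 * ε) / ε) ^ n ∧
      closedBall x R ⊆ ⋃ u ∈ U, closedBall u ε := by
  obtain ⟨P, hPX, hPsep, hPcov⟩ :=
    exists_maximal_separated (X := closedBall x R) isBounded_closedBall hε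
  exact ⟨P, card_le_of_separated_in_ball hε hR (fun p hp => hPX hp) hPsep, hPcov⟩

/-- the greedy invariant -/
def good (δ s : ℝ) (Q : Finset (EN n)) : Prop :=
  ∀ (x : EN n) (r : ℝ), δ ≤ r → r ≤ 1 →
    ((Q.filter (· ∈ closedBall x r)).card : ℝ) ≤ 50 * (r / δ) ^ s

def greedy (δ s : ℝ) (l : List (EN n)) : Finset (EN n) :=
  l.foldr (fun p Q => if good δ s (insert p Q) then insert p Q else Q) ∅

lemma greedy_nil (δ s : ℝ) : greedy (n := n) δ s [] = ∅ := rfl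

lemma greedy_cons (δ s : ℝ) (p : EN n) (l : List (EN n)) :
    greedy δ s (p :: l) =
      if good δ s (insert p (greedy δ s l)) then insert p (greedy δ s l) else greedy δ s l := rfl

lemma rpow_ratio_nonneg {δ r s : ℝ} (hδ : 0 < δ) (hr : δ ≤ r) : 0 ≤ (r / δ) ^ s :=
  Real.rpow_nonneg (div_nonneg (by linarith) hδ.le) s

lemma one_le_rpow_ratio {δ r s : ℝ} (hδ : 0 < δ) (hr : δ ≤ r) (hs : 0 ≤ s) :
    1 ≤ (r / δ) ^ s :=
  Real.one_le_rpow ((one_le_div hδ).mpr hr) hs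

lemma greedy_good {δ s : ℝ} (hδ : 0 < δ) (l : List (EN n)) : good δ s (greedy δ s l) := by
  induction l with
  | nil =>
    intro x r hr hr1
    simp only [greedy_nil, Finset.filter_empty, Finset.card_empty, Nat.cast_zero]
    have := rpow_ratio_nonneg (s := s) hδ hr
    linarith
  | cons p l ih =>
    rw [greedy_cons]
    split
    · assumption
    · exact ih

lemma greedy_subset_cons (δ s : ℝ) (p : EN n) (l : List (EN n)) :
    greedy δ s l ⊆ greedy δ s (p :: l) := by
  rw [greedy_cons]
  split
  · exact Finset.subset_insert _ _
  · exact Finset.Subset.refl _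

lemma greedy_subset (δ s : ℝ) (l : List (EN n)) : ∀ p ∈ greedy δ s l, p ∈ l := by
  induction l with
  | nil => simp [greedy_nil]
  | cons q l ih =>
    intro p hp
    rw [greedy_cons] at hp
    by_cases hg : good δ s (insert q (greedy δ s l))
    · rw [if_pos hg] at hp
      rcases Finset.mem_insert.mp hp with rfl | hp
      · exact List.mem_cons_self
      · exact List.mem_cons_of_mem _ (ih p hp)
    · rw [if_neg hg] at hp
      exact List.mem_cons_of_mem _ (ih p hp)

lemma greedy_nonempty {δ s : ℝ} (hδ : 0 < δ) (hs : 0 ≤ s) (p : EN n) (l : List (EN n)) :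
    (greedy δ s (p :: l)).Nonempty := by
  rw [greedy_cons]
  rcases (greedy δ s l).eq_empty_or_nonempty with he | hne
  · rw [he]
    have hg : good δ s (insert p (∅ : Finset (EN n))) := by
      intro x r hr hr1
      have h1 : ((insert p (∅:Finset (EN n))).filter (· ∈ closedBall x r)).card ≤ 1 := by
        apply le_trans (Finset.card_filter_le _ _)
        simp
      have h2 := one_le_rpow_ratio hδ hr hs
      have h3 : (1:ℝ) ≤ 50 * (r/δ)^s := by nlinarith
      exact le_trans (by exact_mod_cast h1) h3
    rw [if_pos hg]
    exact ⟨p, Finset.mem_insert_self _ _⟩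
  · split
    · exact ⟨p, Finset.mem_insert_self _ _⟩
    · exact hne

/-- every list element is in the greedy set or has a "full ball" witness -/
lemma greedy_witness {δ s : ℝ} (hδ : 0 < δ) (hs : 0 ≤ s) (l : List (EN n)) :
    ∀ p ∈ l, p ∈ greedy δ s l ∨ ∃ (x : EN n) (r : ℝ), δ ≤ r ∧ r ≤ 1 ∧
      p ∈ closedBall x r ∧
      49 * (r / δ) ^ s ≤ (((greedy δ s l).filter (· ∈ closedBall x r)).card : ℝ) := by
  induction l with
  | nil => simp
  | cons q l ih =>
    intro p hp
    rcases List.mem_cons.mp hp with rfl | hpl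
    · by_cases hg : good δ s (insert p (greedy δ s l))
      · left; rw [greedy_cons, if_pos hg]; exact Finset.mem_insert_self _ _
      · right
        have hQ : greedy δ s (p :: l) = greedy δ s l := by rw [greedy_cons, if_neg hg]
        simp only [good, not_forall] at hg
        obtain ⟨x, r, hr, hr1, hbad⟩ := hg
        push_neg at hbad
        refine ⟨x, r, hr, hr1, ?_, ?_⟩
        · by_contra hpb
          have heq : (insert p (greedy δ s l)).filter (· ∈ closedBall x r) =
              (greedy δ s l).filter (· ∈ closedBall x r) := by
            rw [Finset.filter_insert, if_neg hpb]
          rw [heq] at hbad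
          exact absurd (greedy_good hδ l x r hr hr1) (not_le.mpr hbad)
        · rw [hQ]
          have hle : ((insert p (greedy δ s l)).filter (· ∈ closedBall x r)).card ≤
              ((greedy δ s l).filter (· ∈ closedBall x r)).card + 1 := by
            rw [Finset.filter_insert]
            split
            · exact Finset.card_insert_le _ _
            · omega
          have h1 := one_le_rpow_ratio hδ hr hs
          have h2 : (50:ℝ) * (r/δ)^s <
              ((greedy δ s l).filter (· ∈ closedBall x r)).card + 1 := by
            calc (50:ℝ) * (r/δ)^s
                < ((insert p (greedy δ s l)).filter (· ∈ closedBall x r)).card := hbad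
              _ ≤ _ := by exact_mod_cast hle
          nlinarith
    · rcases ih p hpl with hmem | ⟨x, r, hr, hr1, hpb, hfull⟩
      · left; exact greedy_subset_cons δ s q l hmem
      · right
        refine ⟨x, r, hr, hr1, hpb, le_trans hfull ?_⟩
        exact_mod_cast Finset.card_le_card
          (Finset.filter_subset_filter _ (greedy_subset_cons δ s q l))

end Statement16Aux

open Statement16Aux in
set_option maxHeartbeats 1600000 in
theorem statement16 (n : ℕ) (hn : 1 ≤ n) (s : ℝ) (hs0 : 0 < s) (hsn : s ≤ (n : ℝ)) :
    ∃ c : ℝ, 0 < c ∧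
    ∀ (δ C : ℝ) (A : Set (EN n)), 0 < δ → δ < 1 / 2 → 0 < C →
      IsFrostman δ s C A →
      ∃ A' ⊆ A, IsKatzTao δ s 100 A' ∧
        ENNReal.ofReal (c * δ ^ (-s) * (Real.log (1 / δ))⁻¹ * C⁻¹) ≤ covNum δ A' := by
  classical
  refine ⟨(10 * (96:ℝ)^n * (6:ℝ)^s)⁻¹, by positivity, ?_⟩
  intro δ C A hδ hδhalf hC hFro
  obtain ⟨hAne, hAbd, hFr⟩ := hFro
  have hδ1 : δ ≤ 1 := by linarith
  have hs0' : (0:ℝ) ≤ s := hs0.le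
  obtain ⟨P, hPA, hPsep, hPcov⟩ := exists_maximal_separated hAbd (by linarith : (0:ℝ) < 2*δ)
  obtain ⟨a₀, ha₀⟩ := hAne
  have hPne : P.Nonempty := by
    have h := hPcov ha₀
    simp only [Set.mem_iUnion] at h
    obtain ⟨p, hp, -⟩ := h
    exact ⟨p, hp⟩
  obtain ⟨N, hN⟩ : ∃ N : ℝ≥0∞, N = covNum δ A := ⟨_, rfl⟩
  rw [← hN] at hFr
  have hcov6 : ∀ p : EN n, ∃ U : Finset (EN n), (U.card : ℝ) ≤ (6:ℝ)^n ∧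
      closedBall p (2*δ) ⊆ ⋃ u ∈ U, closedBall u δ := by
    intro p
    obtain ⟨U, hU1, hU2⟩ := exists_cover_closedBall hδ (by linarith : (0:ℝ) ≤ 2*δ) p
    refine ⟨U, le_trans hU1 (le_of_eq ?_), hU2⟩
    have h6 : (2*(2*δ)+2*δ)/δ = 6 := by field_simp; ring
    rw [h6]
  choose U hU1 hU2 using hcov6
  have hNle : N ≤ ((P.biUnion U).card : ℝ≥0∞) := by
    rw [hN]
    apply covNum_le_card
    intro a ha
    have h := hPcov ha
    simp only [Set.mem_iUnion] at h ⊢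
    obtain ⟨p, hp, hmem⟩ := h
    have h2 := hU2 p hmem
    simp only [Set.mem_iUnion] at h2
    obtain ⟨u, hu, hmem'⟩ := h2
    exact ⟨u, Finset.mem_biUnion.mpr ⟨p, hp, hu⟩, hmem'⟩
  have hNtop : N ≠ ⊤ := (lt_of_le_of_lt hNle (ENNReal.natCast_lt_top _)).ne
  obtain ⟨Nr, hNrdef⟩ : ∃ x : ℝ, x = N.toReal := ⟨_, rfl⟩
  have hNr0 : 0 ≤ Nr := by rw [hNrdef]; exact ENNReal.toReal_nonneg
  have hNr6 : Nr ≤ (6:ℝ)^n * P.card := by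
    have h1 : Nr ≤ ((P.biUnion U).card : ℝ) := by
      have h := ENNReal.toReal_mono (ENNReal.natCast_ne_top _) hNle
      rw [← hNrdef] at h
      simpa using h
    refine le_trans h1 ?_
    have h3 : ((P.biUnion U).card:ℝ) ≤ ∑ p ∈ P, ((U p).card:ℝ) := by
      exact_mod_cast Finset.card_biUnion_le
    refine le_trans h3 ?_
    calc ∑ p ∈ P, ((U p).card:ℝ) ≤ ∑ _p ∈ P, (6:ℝ)^n :=
          Finset.sum_le_sum (fun p _ => hU1 p)
      _ = (6:ℝ)^n * P.card := by
          rw [Finset.sum_const, nsmul_eq_mul]; ring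
  -- Frostman count for the separated set P
  have sepcount : ∀ (y : EN n) (ρ : ℝ), δ ≤ ρ → ρ ≤ 1 →
      ((P.filter (· ∈ closedBall y ρ)).card : ℝ) ≤ C * ρ^s * Nr := by
    intro y ρ hρ hρ1
    have h1 : (((P.filter (· ∈ closedBall y ρ)).card : ℕ) : ℝ≥0∞) ≤
        covNum δ (A ∩ closedBall y ρ) := by
      apply card_le_covNum
      · intro p hp q hq hne
        exact hPsep p (Finset.mem_filter.mp hp).1 q (Finset.mem_filter.mp hq).1 hne
      · intro p hp
        simp only [Finset.coe_filter, Set.mem_setOf_eq] at hp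
        exact ⟨hPA hp.1, hp.2⟩
    have h2 : covNum δ (A ∩ closedBall y ρ) ≤ ENNReal.ofReal (C * ρ^s) * N := hFr y ρ hρ hρ1
    have hρ0 : (0:ℝ) < ρ := lt_of_lt_of_le hδ hρ
    have hfin : ENNReal.ofReal (C * ρ^s) * N ≠ ⊤ :=
      ENNReal.mul_ne_top ENNReal.ofReal_ne_top hNtop
    have h4 := ENNReal.toReal_mono hfin (le_trans h1 h2)
    rw [ENNReal.toReal_mul, ENNReal.toReal_ofReal (by positivity), ← hNrdef] at h4
    simpa using h4
  have h16 : (1:ℝ) ≤ (16:ℝ)^n := one_le_pow₀ (by norm_num)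
  -- extended count up to radius 7
  have hcount7 : ∀ (y : EN n) (ρ : ℝ), δ ≤ ρ → ρ ≤ 7 →
      ((P.filter (· ∈ closedBall y ρ)).card : ℝ) ≤ (16:ℝ)^n * (C * ρ^s * Nr) := by
    intro y ρ hρ hρ7
    have hρ0 : (0:ℝ) < ρ := lt_of_lt_of_le hδ hρ
    by_cases hρ1 : ρ ≤ 1
    · refine le_trans (sepcount y ρ hρ hρ1) ?_
      have hpos : 0 ≤ C * ρ^s * Nr := by
        have := Real.rpow_nonneg hρ0.le s
        positivity
      nlinarith
    · push_neg at hρ1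
      obtain ⟨V, hV1, hV2⟩ := exists_cover_closedBall one_pos (by norm_num : (0:ℝ) ≤ 7) y
      have hV1' : (V.card:ℝ) ≤ (16:ℝ)^n := by
        refine le_trans hV1 (le_of_eq ?_)
        norm_num
      have hsub : P.filter (· ∈ closedBall y ρ) ⊆
          V.biUnion (fun v => P.filter (· ∈ closedBall v 1)) := by
        intro p hp
        rw [Finset.mem_filter] at hp
        have hp7 : p ∈ closedBall y 7 :=
          closedBall_subset_closedBall hρ7 hp.2
        have h := hV2 hp7
        simp only [Set.mem_iUnion] at h
        obtain ⟨v, hv, hmem⟩ := h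
        exact Finset.mem_biUnion.mpr ⟨v, hv, Finset.mem_filter.mpr ⟨hp.1, hmem⟩⟩
      have hone : ∀ v : EN n, ((P.filter (· ∈ closedBall v 1)).card : ℝ) ≤ C * Nr := by
        intro v
        have := sepcount v 1 hδ1 le_rfl
        rwa [Real.one_rpow, mul_one] at this
      have hcard : ((P.filter (· ∈ closedBall y ρ)).card : ℝ) ≤ (16:ℝ)^n * (C * Nr) := by
        have h1 : ((P.filter (· ∈ closedBall y ρ)).card : ℝ) ≤
            ∑ v ∈ V, ((P.filter (· ∈ closedBall v 1)).card : ℝ) := by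
          have := le_trans (Finset.card_le_card hsub) Finset.card_biUnion_le
          exact_mod_cast this
        refine le_trans h1 ?_
        calc ∑ v ∈ V, ((P.filter (· ∈ closedBall v 1)).card : ℝ)
            ≤ ∑ _v ∈ V, (C * Nr) := Finset.sum_le_sum (fun v _ => hone v)
          _ = V.card * (C * Nr) := by rw [Finset.sum_const, nsmul_eq_mul]
          _ ≤ (16:ℝ)^n * (C * Nr) := by
              have : (0:ℝ) ≤ C * Nr := by positivity
              nlinarith
      refine le_trans hcard ?_
      have hρs : (1:ℝ) ≤ ρ^s := Real.one_le_rpow hρ1.le hs0'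
      have : C * Nr ≤ C * ρ^s * Nr := by nlinarith
      nlinarith

  -- run the greedy algorithm on P
  obtain ⟨l, hl⟩ : ∃ l : List (EN n), l = P.toList := ⟨_, rfl⟩
  obtain ⟨Q, hQ⟩ : ∃ Q : Finset (EN n), Q = greedy δ s l := ⟨_, rfl⟩
  have hQP : Q ⊆ P := by
    intro p hp
    rw [hQ] at hp
    rw [hl] at *
    exact Finset.mem_toList.mp (greedy_subset δ s _ p hp)
  have hQA : (↑Q : Set (EN n)) ⊆ A := fun p hp => hPA (hQP hp)
  have hQsep : ∀ p ∈ Q, ∀ q ∈ Q, p ≠ q → 2*δ < dist p q :=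
    fun p hp q hq hne => hPsep p (hQP hp) q (hQP hq) hne
  have hQne : Q.Nonempty := by
    obtain ⟨p, l', hl'⟩ := List.exists_cons_of_ne_nil
      (show l ≠ [] by
        rw [hl]
        simp only [ne_eq, Finset.toList_eq_nil]
        exact hPne.ne_empty)
    rw [hQ, hl']
    exact greedy_nonempty hδ hs0' p l'
  obtain ⟨M, hM⟩ : ∃ M : ℕ, M = Q.card := ⟨_, rfl⟩
  have hM1 : 1 ≤ M := by rw [hM]; exact Finset.card_pos.mpr hQne
  have hcovQ : (M : ℝ≥0∞) ≤ covNum δ (↑Q : Set (EN n)) := by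
    rw [hM]
    exact card_le_covNum hQsep (subset_refl _)
  -- the Katz-Tao property of Q
  have hKT : IsKatzTao δ s 100 (↑Q : Set (EN n)) := by
    refine ⟨by exact_mod_cast hQne, Q.finite_toSet.isBounded, ?_⟩
    intro x r hr hr1
    have hcover : (↑Q ∩ closedBall x r : Set (EN n)) ⊆
        ⋃ q ∈ Q.filter (· ∈ closedBall x r), closedBall q δ := by
      intro p hp
      simp only [Set.mem_iUnion]
      exact ⟨p, Finset.mem_filter.mpr ⟨hp.1, hp.2⟩, mem_closedBall_self hδ.le⟩
    refine le_trans (covNum_le_card _ hcover) ?_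
    have h2 := greedy_good (s := s) hδ l x r hr hr1
    rw [← hQ] at h2
    rw [← ENNReal.ofReal_natCast]
    apply ENNReal.ofReal_le_ofReal
    have h3 := rpow_ratio_nonneg (s := s) hδ hr
    linarith
  -- witnesses for rejected points
  have hwitx : ∀ p : EN n, ∃ (x : EN n) (r : ℝ), δ ≤ r ∧ r ≤ 1 ∧
      (p ∈ P ∧ p ∉ Q → p ∈ closedBall x r ∧
        49 * (r/δ)^s ≤ ((Q.filter (· ∈ closedBall x r)).card : ℝ)) := by
    intro p
    by_cases hp : p ∈ P ∧ p ∉ Q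
    · rcases greedy_witness hδ hs0' l p (by rw [hl]; exact Finset.mem_toList.mpr hp.1) with
        hmem | ⟨x, r, h1, h2, h3, h4⟩
      · rw [← hQ] at hmem
        exact absurd hmem hp.2
      · rw [← hQ] at h4
        exact ⟨x, r, h1, h2, fun _ => ⟨h3, h4⟩⟩
    · exact ⟨0, δ, le_rfl, hδ1, fun h => absurd h hp⟩
  choose xw rw' hrw1 hrw2 hwit using hwitx
  -- dyadic scales
  obtain ⟨J, hJ⟩ : ∃ J : ℕ, J = Nat.ceil (Real.logb 2 δ⁻¹) := ⟨_, rfl⟩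
  have hδinv0 : (0:ℝ) < δ⁻¹ := by positivity
  have hδinv2 : (2:ℝ) ≤ δ⁻¹ := by
    rw [le_inv_comm₀ two_pos hδ]
    linarith
  have hlogb1 : 1 ≤ Real.logb 2 δ⁻¹ := by
    have h := Real.logb_le_logb_of_le (b := 2) one_lt_two two_pos hδinv2
    simpa using h
  have h2J : δ⁻¹ ≤ (2:ℝ)^J := by
    have h1 : δ⁻¹ = (2:ℝ) ^ (Real.logb 2 δ⁻¹) :=
      (Real.rpow_logb two_pos (by norm_num) hδinv0).symm
    rw [h1, ← Real.rpow_natCast 2 J]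
    refine Real.rpow_le_rpow_of_exponent_le one_le_two ?_
    rw [hJ]
    exact Nat.le_ceil _
  have h2J2 : (2:ℝ)^J * δ ≤ 2 := by
    have h1 : (J:ℝ) ≤ Real.logb 2 δ⁻¹ + 1 := by
      rw [hJ]
      exact le_of_lt (Nat.ceil_lt_add_one (by linarith))
    have h2 : (2:ℝ)^(J:ℝ) ≤ (2:ℝ)^(Real.logb 2 δ⁻¹ + 1) :=
      Real.rpow_le_rpow_of_exponent_le one_le_two h1
    rw [Real.rpow_add two_pos, Real.rpow_logb two_pos (by norm_num) hδinv0,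
      Real.rpow_one] at h2
    have h3 : (2:ℝ)^(J:ℕ) = (2:ℝ)^(J:ℝ) := (Real.rpow_natCast 2 J).symm
    rw [h3]
    calc (2:ℝ)^(J:ℝ) * δ ≤ (δ⁻¹ * 2) * δ := mul_le_mul_of_nonneg_right h2 hδ.le
      _ = 2 := by field_simp
  have h2Jδ : (1:ℝ) ≤ 2^J * δ := by
    calc (1:ℝ) = δ⁻¹ * δ := by field_simp
      _ ≤ 2^J * δ := mul_le_mul_of_nonneg_right h2J hδ.le
  have hex : ∀ p : EN n, ∃ j : ℕ, j ≤ J ∧ rw' p ≤ 2^j * δ ∧ (2:ℝ)^j * δ ≤ 2 * rw' p := by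
    intro p
    have hex0 : ∃ j : ℕ, rw' p ≤ 2^j * δ := ⟨J, le_trans (hrw2 p) h2Jδ⟩
    refine ⟨Nat.find hex0, ?_, Nat.find_spec hex0, ?_⟩
    · exact Nat.find_min' _ (le_trans (hrw2 p) h2Jδ)
    · rcases Nat.eq_zero_or_pos (Nat.find hex0) with h0 | hpos
      · rw [h0]
        have := hrw1 p
        simp only [pow_zero, one_mul]
        linarith
      · obtain ⟨k, hk⟩ := Nat.exists_eq_succ_of_ne_zero hpos.ne'
        have hmin := Nat.find_min hex0 (show k < Nat.find hex0 by omega)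
        push_neg at hmin
        rw [hk, pow_succ]
        have h2 : (2:ℝ)^k * δ < rw' p := hmin
        calc (2:ℝ)^k * 2 * δ = 2*((2:ℝ)^k*δ) := by ring
          _ ≤ 2 * rw' p := by linarith
  choose jw hjwJ hjws hjwh using hex
  -- the rejected set, partitioned by scale
  obtain ⟨W, hW⟩ : ∃ W : ℕ → Finset (EN n),
      W = fun j => (P \ Q).filter (fun p => jw p = j) := ⟨_, rfl⟩
  have hRsub : (P \ Q) ⊆ (Finset.range (J+1)).biUnion W := by
    intro p hp
    refine Finset.mem_biUnion.mpr ⟨jw p, Finset.mem_range.mpr ?_, ?_⟩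
    · have := hjwJ p
      omega
    · rw [hW]
      exact Finset.mem_filter.mpr ⟨hp, rfl⟩
  have hRcard : ((P \ Q).card : ℝ) ≤ ∑ j ∈ Finset.range (J+1), ((W j).card:ℝ) := by
    exact_mod_cast le_trans (Finset.card_le_card hRsub) Finset.card_biUnion_le
  have h6s : (1:ℝ) ≤ (6:ℝ)^s := Real.one_le_rpow (by norm_num) hs0'
  have hδs0 : (0:ℝ) < δ^s := Real.rpow_pos_of_pos hδ s
  -- the per-scale bound
  have perscale : ∀ j ∈ Finset.range (J+1), ((W j).card : ℝ) ≤
      (M:ℝ) * ((16:ℝ)^n * (6:ℝ)^s * C * δ^s * Nr) / 49 := by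
    intro j hjr
    have hj : j ≤ J := by
      have := Finset.mem_range.mp hjr; omega
    obtain ⟨ρ, hρdef⟩ : ∃ x : ℝ, x = 2^j * δ := ⟨_, rfl⟩
    have h2j1 : (1:ℝ) ≤ 2^j := one_le_pow₀ one_le_two
    have hρδ : δ ≤ ρ := by rw [hρdef]; exact le_mul_of_one_le_left hδ.le h2j1
    have hρ0 : 0 < ρ := lt_of_lt_of_le hδ hρδ
    have hρ2 : ρ ≤ 2 := by
      have h1 : (2:ℝ)^j ≤ 2^J := pow_le_pow_right₀ one_le_two hj
      have h2 : (2:ℝ)^j * δ ≤ 2^J * δ := mul_le_mul_of_nonneg_right h1 hδ.le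
      rw [hρdef]
      linarith [h2J2]
    obtain ⟨T, hT⟩ : ∃ x : ℝ, x = 49 * (ρ/(2*δ))^s := ⟨_, rfl⟩
    have hratpos : (0:ℝ) < (ρ/(2*δ))^s := Real.rpow_pos_of_pos (by positivity) s
    have hT0 : 0 < T := by rw [hT]; positivity
    -- relations that used to be definitional

    -- fullness for witnesses at this scale
    have hfull : ∀ p ∈ W j, T ≤ ((Q.filter (· ∈ closedBall (xw p) ρ)).card : ℝ) := by
      intro p hp
      rw [hW] at hp
      obtain ⟨hpPQ, hpj⟩ := Finset.mem_filter.mp hp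
      obtain ⟨hpP, hpQ⟩ := Finset.mem_sdiff.mp hpPQ
      obtain ⟨hball, hfull'⟩ := hwit p ⟨hpP, hpQ⟩
      have hrle : rw' p ≤ ρ := by
        have h := hjws p
        rw [hpj] at h
        rw [hρdef]
        exact h
      have h1 : ((Q.filter (· ∈ closedBall (xw p) (rw' p))).card : ℝ)
          ≤ ((Q.filter (· ∈ closedBall (xw p) ρ)).card : ℝ) := by
        have hsubf : Q.filter (· ∈ closedBall (xw p) (rw' p)) ⊆
            Q.filter (· ∈ closedBall (xw p) ρ) := by
          intro q hq
          rw [Finset.mem_filter] at hq ⊢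
          exact ⟨hq.1, closedBall_subset_closedBall hrle hq.2⟩
        exact_mod_cast Finset.card_le_card hsubf
      have h2 : T ≤ 49 * (rw' p / δ)^s := by
        have hd : ρ/(2*δ) ≤ rw' p / δ := by
          rw [div_le_div_iff₀ (by positivity) hδ]
          have hh := hjwh p
          rw [hpj] at hh
          rw [← hρdef] at hh
          calc ρ * δ ≤ (2 * rw' p) * δ := mul_le_mul_of_nonneg_right hh hδ.le
            _ = rw' p * (2*δ) := by ring
        have hmono := Real.rpow_le_rpow (by positivity) hd hs0'
        rw [hT]
        linarith
      linarith [hfull', h1, h2]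
    -- maximal separated subfamily of the witness centers
    obtain ⟨S, hSX, hSsep, hScov⟩ := exists_maximal_separated
      (X := (↑((W j).image xw) : Set (EN n)))
      ((W j).image xw).finite_toSet.isBounded (by positivity : (0:ℝ) < 2*ρ)
    have hdisj : ∀ c ∈ S, ∀ c' ∈ S, c ≠ c' →
        Disjoint (Q.filter (· ∈ closedBall c ρ)) (Q.filter (· ∈ closedBall c' ρ)) := by
      intro c hc c' hc' hne
      rw [Finset.disjoint_left]
      intro q hq hq'
      have h1 := (Finset.mem_filter.mp hq).2
      have h2 := (Finset.mem_filter.mp hq').2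
      rw [mem_closedBall] at h1 h2
      have h3 := hSsep c hc c' hc' hne
      have h4 : dist c c' ≤ 2*ρ :=
        le_trans (dist_triangle_left c c' q) (by linarith)
      linarith
    have hSfull : ∀ c ∈ S, T ≤ ((Q.filter (· ∈ closedBall c ρ)).card : ℝ) := by
      intro c hc
      have h := hSX hc
      simp only [Finset.coe_image, Set.mem_image, Finset.mem_coe] at h
      obtain ⟨p, hp, rfl⟩ := h
      exact hfull p hp
    have hSM : (S.card : ℝ) * T ≤ (M:ℝ) := by
      have h1 : ∑ c ∈ S, ((Q.filter (· ∈ closedBall c ρ)).card) =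
          (S.biUnion (fun c => Q.filter (· ∈ closedBall c ρ))).card :=
        (Finset.card_biUnion hdisj).symm
      have h2 : (S.biUnion (fun c => Q.filter (· ∈ closedBall c ρ))).card ≤ M := by
        rw [hM]
        exact Finset.card_le_card (Finset.biUnion_subset.mpr (fun c _ => Finset.filter_subset _ _))
      have h3 : (S.card:ℝ) * T = ∑ _c ∈ S, T := by
        rw [Finset.sum_const, nsmul_eq_mul]
      rw [h3]
      calc ∑ _c ∈ S, T ≤ ∑ c ∈ S, ((Q.filter (· ∈ closedBall c ρ)).card:ℝ) :=
            Finset.sum_le_sum (fun c hc => hSfull c hc)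
        _ ≤ (M:ℝ) := by
            rw [← Nat.cast_sum]
            exact_mod_cast le_trans (le_of_eq h1) h2
    have hWsub : W j ⊆ S.biUnion (fun c => P.filter (· ∈ closedBall c (3*ρ))) := by
      intro p hp
      have hp0 := hp
      rw [hW] at hp
      obtain ⟨hpPQ, hpj⟩ := Finset.mem_filter.mp hp
      obtain ⟨hpP, hpQ⟩ := Finset.mem_sdiff.mp hpPQ
      obtain ⟨hball, -⟩ := hwit p ⟨hpP, hpQ⟩
      have hrle : rw' p ≤ ρ := by
        have h := hjws p
        rw [hpj] at h
        rw [hρdef]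
        exact h
      have hc : (xw p) ∈ (↑((W j).image xw) : Set (EN n)) := by
        simp only [Finset.coe_image, Set.mem_image, Finset.mem_coe]
        exact ⟨p, hp0, rfl⟩
      have h := hScov hc
      simp only [Set.mem_iUnion] at h
      obtain ⟨c, hcS, hmem⟩ := h
      rw [mem_closedBall] at hmem
      refine Finset.mem_biUnion.mpr ⟨c, hcS, Finset.mem_filter.mpr ⟨hpP, ?_⟩⟩
      rw [mem_closedBall]
      rw [mem_closedBall] at hball
      calc dist p c ≤ dist p (xw p) + dist (xw p) c := dist_triangle _ _ _
        _ ≤ ρ + 2*ρ := add_le_add (le_trans hball hrle) hmem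
        _ = 3*ρ := by ring
    have hWcard : ((W j).card:ℝ) ≤ (S.card:ℝ) * ((16:ℝ)^n * (C * (3*ρ)^s * Nr)) := by
      have h1 : ((W j).card:ℝ) ≤
          ∑ c ∈ S, ((P.filter (· ∈ closedBall c (3*ρ))).card:ℝ) := by
        exact_mod_cast le_trans (Finset.card_le_card hWsub) Finset.card_biUnion_le
      refine le_trans h1 ?_
      have hδ3ρ : δ ≤ 3*ρ := by linarith
      have h3ρ7 : 3*ρ ≤ 7 := by linarith
      calc ∑ c ∈ S, ((P.filter (· ∈ closedBall c (3*ρ))).card:ℝ)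
          ≤ ∑ _c ∈ S, (16:ℝ)^n * (C * (3*ρ)^s * Nr) :=
            Finset.sum_le_sum (fun c _ => hcount7 c (3*ρ) hδ3ρ h3ρ7)
        _ = (S.card:ℝ) * ((16:ℝ)^n * (C * (3*ρ)^s * Nr)) := by
            rw [Finset.sum_const, nsmul_eq_mul]
    -- algebra to conclude the per-scale bound
    have e1 : ((3*ρ:ℝ))^s = (6:ℝ)^s * δ^s * (ρ/(2*δ))^s := by
      rw [← Real.mul_rpow (by norm_num) hδ.le, ← Real.mul_rpow (by positivity) (by positivity)]
      congr 1
      field_simp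
      ring
    have hSc : (S.card:ℝ) * (ρ/(2*δ))^s ≤ (M:ℝ)/49 := by
      rw [hT] at hSM
      have h49 : (S.card:ℝ) * (49 * (ρ/(2*δ))^s) = 49 * ((S.card:ℝ) * (ρ/(2*δ))^s) := by ring
      rw [h49] at hSM
      linarith
    have hXpos : (0:ℝ) ≤ (16:ℝ)^n * C * Nr * (6:ℝ)^s * δ^s :=
      mul_nonneg (mul_nonneg (mul_nonneg (mul_nonneg (by positivity) hC.le) hNr0)
        (by linarith)) hδs0.le
    have e2 : (S.card:ℝ) * ((16:ℝ)^n * (C * (3*ρ)^s * Nr)) =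
        ((S.card:ℝ) * (ρ/(2*δ))^s) * ((16:ℝ)^n * C * Nr * (6:ℝ)^s * δ^s) := by
      rw [e1]; ring
    calc ((W j).card:ℝ) ≤ (S.card:ℝ) * ((16:ℝ)^n * (C * (3*ρ)^s * Nr)) := hWcard
      _ = ((S.card:ℝ) * (ρ/(2*δ))^s) * ((16:ℝ)^n * C * Nr * (6:ℝ)^s * δ^s) := e2
      _ ≤ ((M:ℝ)/49) * ((16:ℝ)^n * C * Nr * (6:ℝ)^s * δ^s) :=
          mul_le_mul_of_nonneg_right hSc hXpos
      _ = (M:ℝ) * ((16:ℝ)^n * (6:ℝ)^s * C * δ^s * Nr) / 49 := by ring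

  -- total counting
  have hM0 : (0:ℝ) ≤ (M:ℝ) := Nat.cast_nonneg M
  have hPM : ((P).card : ℝ) ≤ (M:ℝ) + ((P \ Q).card:ℝ) := by
    have hsub : P ⊆ Q ∪ (P \ Q) := by
      intro p hp
      by_cases h : p ∈ Q
      · exact Finset.mem_union_left _ h
      · exact Finset.mem_union_right _ (Finset.mem_sdiff.mpr ⟨hp, h⟩)
    have h2 := le_trans (Finset.card_le_card hsub) (Finset.card_union_le _ _)
    rw [hM]
    exact_mod_cast h2
  have hRtot : ((P \ Q).card : ℝ) ≤
      ((J:ℝ)+1) * ((M:ℝ) * ((16:ℝ)^n * (6:ℝ)^s * C * δ^s * Nr) / 49) := by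
    refine le_trans hRcard ?_
    calc ∑ j ∈ Finset.range (J+1), ((W j).card:ℝ)
        ≤ ∑ _j ∈ Finset.range (J+1),
            ((M:ℝ) * ((16:ℝ)^n * (6:ℝ)^s * C * δ^s * Nr) / 49) :=
          Finset.sum_le_sum perscale
      _ = ((J:ℝ)+1) * ((M:ℝ) * ((16:ℝ)^n * (6:ℝ)^s * C * δ^s * Nr) / 49) := by
          rw [Finset.sum_const, Finset.card_range, nsmul_eq_mul]
          push_cast
          ring
  -- the trivial lower bound on N
  have h1CN : 1 ≤ C * δ^s * Nr := by
    have h1 : (1:ℝ≥0∞) ≤ covNum δ (A ∩ closedBall a₀ δ) :=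
      one_le_covNum ⟨a₀, ha₀, mem_closedBall_self hδ.le⟩
    have h2 := hFr a₀ δ le_rfl hδ1
    have hfin : ENNReal.ofReal (C*δ^s) * N ≠ ⊤ :=
      ENNReal.mul_ne_top ENNReal.ofReal_ne_top hNtop
    have h3 := ENNReal.toReal_mono hfin (le_trans h1 h2)
    rw [ENNReal.toReal_mul, ENNReal.toReal_ofReal (by positivity), ← hNrdef] at h3
    simpa using h3
  have hNrpos : 0 < Nr := by
    by_contra h
    push_neg at h
    have h2 : C * δ^s * Nr ≤ 0 :=
      mul_nonpos_of_nonneg_of_nonpos (by positivity) h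
    linarith
  have one_le_mul' : ∀ {x y : ℝ}, 1 ≤ x → 1 ≤ y → 1 ≤ x*y :=
    fun {x y} hx hy => le_trans hx (le_mul_of_one_le_right (by linarith) hy)
  have hJ1 : (1:ℝ) ≤ (J:ℝ)+1 := by
    have : (0:ℝ) ≤ (J:ℝ) := Nat.cast_nonneg J
    linarith
  have hE1 : 1 ≤ ((J:ℝ)+1) * ((16:ℝ)^n * ((6:ℝ)^s * (C * δ^s * Nr))) :=
    one_le_mul' hJ1 (one_le_mul' h16 (one_le_mul' h6s h1CN))
  have hME : (M:ℝ) + ((P \ Q).card:ℝ) ≤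
      (M:ℝ) * (2 * (((J:ℝ)+1) * ((16:ℝ)^n * ((6:ℝ)^s * (C * δ^s * Nr))))) := by
    have hME0 : (0:ℝ) ≤ (M:ℝ) * (((J:ℝ)+1) * ((16:ℝ)^n * ((6:ℝ)^s * (C * δ^s * Nr)))) :=
      mul_nonneg hM0 (by linarith)
    have h1 : ((P \ Q).card:ℝ) ≤
        (M:ℝ) * (((J:ℝ)+1) * ((16:ℝ)^n * ((6:ℝ)^s * (C * δ^s * Nr)))) := by
      have hin0 : (0:ℝ) ≤ (M:ℝ) * ((16:ℝ)^n * (6:ℝ)^s * C * δ^s * Nr) := by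
        refine mul_nonneg hM0 ?_
        have h6s0 : (0:ℝ) ≤ (6:ℝ)^s := by linarith
        have h16n0 : (0:ℝ) ≤ (16:ℝ)^n := by positivity
        exact mul_nonneg (mul_nonneg (mul_nonneg (mul_nonneg h16n0 h6s0) hC.le) hδs0.le) hNr0
      have step : ((J:ℝ)+1) * ((M:ℝ) * ((16:ℝ)^n * (6:ℝ)^s * C * δ^s * Nr) / 49) ≤
          ((J:ℝ)+1) * ((M:ℝ) * ((16:ℝ)^n * (6:ℝ)^s * C * δ^s * Nr)) := by
        refine mul_le_mul_of_nonneg_left ?_ (by linarith)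
        linarith
      have eqq : ((J:ℝ)+1) * ((M:ℝ) * ((16:ℝ)^n * (6:ℝ)^s * C * δ^s * Nr)) =
          (M:ℝ) * (((J:ℝ)+1) * ((16:ℝ)^n * ((6:ℝ)^s * (C * δ^s * Nr)))) := by ring
      exact le_trans hRtot (le_of_le_of_eq step eqq)
    have h2 : (M:ℝ) ≤ (M:ℝ) * (((J:ℝ)+1) * ((16:ℝ)^n * ((6:ℝ)^s * (C * δ^s * Nr)))) :=
      le_mul_of_one_le_right hM0 hE1
    calc (M:ℝ) + ((P \ Q).card:ℝ)
        ≤ (M:ℝ) * (((J:ℝ)+1) * ((16:ℝ)^n * ((6:ℝ)^s * (C * δ^s * Nr)))) +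
          (M:ℝ) * (((J:ℝ)+1) * ((16:ℝ)^n * ((6:ℝ)^s * (C * δ^s * Nr)))) := add_le_add h2 h1
      _ = (M:ℝ) * (2 * (((J:ℝ)+1) * ((16:ℝ)^n * ((6:ℝ)^s * (C * δ^s * Nr))))) := by ring
  have hfinal0 : Nr ≤ (2*(6:ℝ)^n*(16:ℝ)^n*(6:ℝ)^s*C*δ^s*((J:ℝ)+1)*(M:ℝ)) * Nr := by
    calc Nr ≤ (6:ℝ)^n * (P.card:ℝ) := hNr6
      _ ≤ (6:ℝ)^n * ((M:ℝ) + ((P \ Q).card:ℝ)) := by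
          refine mul_le_mul_of_nonneg_left hPM (by positivity)
      _ ≤ (6:ℝ)^n * ((M:ℝ) * (2 * (((J:ℝ)+1) * ((16:ℝ)^n * ((6:ℝ)^s * (C * δ^s * Nr)))))) := by
          refine mul_le_mul_of_nonneg_left hME (by positivity)
      _ = (2*(6:ℝ)^n*(16:ℝ)^n*(6:ℝ)^s*C*δ^s*((J:ℝ)+1)*(M:ℝ)) * Nr := by ring
  have hK1 : 1 ≤ 2*(6:ℝ)^n*(16:ℝ)^n*(6:ℝ)^s*C*δ^s*((J:ℝ)+1)*(M:ℝ) :=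
    (le_mul_iff_one_le_left hNrpos).mp hfinal0
  have h96 : (6:ℝ)^n*(16:ℝ)^n = (96:ℝ)^n := by
    rw [← mul_pow]; norm_num
  -- bound J+1 by the logarithm
  have hδinv1 : (1:ℝ) < δ⁻¹ := by linarith
  have hLpos : 0 < Real.log (1/δ) := by
    rw [one_div]
    exact Real.log_pos hδinv1
  have hL0 : (0:ℝ) ≤ Real.log δ⁻¹ := by
    rw [← one_div] at *
    linarith
  have hlog2 : (0.6931471803:ℝ) < Real.log 2 := Real.log_two_gt_d9
  have hJ5 : (J:ℝ)+1 ≤ 5 * Real.log (1/δ) := by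
    have hJlog : (J:ℝ) ≤ Real.logb 2 δ⁻¹ + 1 := by
      rw [hJ]
      exact le_of_lt (Nat.ceil_lt_add_one (by linarith))
    have h3 : (J:ℝ)+1 ≤ 3 * Real.logb 2 δ⁻¹ := by linarith
    have h4 : Real.logb 2 δ⁻¹ = Real.log δ⁻¹ / Real.log 2 := Real.log_div_log.symm
    have h5 : (3:ℝ) / Real.log 2 ≤ 5 := by
      rw [div_le_iff₀ (by linarith)]
      linarith
    have h6 : 3 * Real.logb 2 δ⁻¹ ≤ 5 * Real.log δ⁻¹ := by
      rw [h4]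
      calc 3 * (Real.log δ⁻¹ / Real.log 2) = (3 / Real.log 2) * Real.log δ⁻¹ := by ring
        _ ≤ 5 * Real.log δ⁻¹ := mul_le_mul_of_nonneg_right h5 hL0
    rw [one_div]
    linarith
  have hB0 : (0:ℝ) ≤ 2*(96:ℝ)^n*(6:ℝ)^s*C*δ^s := by
    have h6s0 : (0:ℝ) ≤ (6:ℝ)^s := by linarith
    have h96n0 : (0:ℝ) ≤ (96:ℝ)^n := by positivity
    exact mul_nonneg (mul_nonneg (mul_nonneg
      (mul_nonneg (by norm_num) h96n0) h6s0) hC.le) hδs0.le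

  have hK2 : 1 ≤ (2*(96:ℝ)^n*(6:ℝ)^s*C*δ^s) * (5*Real.log (1/δ)) * (M:ℝ) := by
    have h := mul_le_mul_of_nonneg_right
      (mul_le_mul_of_nonneg_left hJ5 hB0) hM0
    have hrw : 2*(6:ℝ)^n*(16:ℝ)^n*(6:ℝ)^s*C*δ^s*((J:ℝ)+1)*(M:ℝ) =
        2*(96:ℝ)^n*(6:ℝ)^s*C*δ^s * ((J:ℝ)+1) * (M:ℝ) := by
      rw [← h96]; ring
    rw [hrw] at hK1
    exact le_trans hK1 h
  have h6spos : (0:ℝ) < (6:ℝ)^s := by linarith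
  have h96pos : (0:ℝ) < (96:ℝ)^n := by positivity
  have hD0 : (0:ℝ) < 2*(96:ℝ)^n*(6:ℝ)^s*C*δ^s * (5*Real.log (1/δ)) :=
    mul_pos (mul_pos (mul_pos (mul_pos (mul_pos two_pos h96pos) h6spos) hC) hδs0)
      (by linarith)
  have hfinR : (10*(96:ℝ)^n*(6:ℝ)^s)⁻¹ * δ^(-s) * (Real.log (1/δ))⁻¹ * C⁻¹ ≤ (M:ℝ) := by
    rw [Real.rpow_neg hδ.le]
    have heq : ((10*(96:ℝ)^n*(6:ℝ)^s)⁻¹ * (δ^s)⁻¹ * (Real.log (1/δ))⁻¹ * C⁻¹)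
        = 1 / (2*(96:ℝ)^n*(6:ℝ)^s*C*δ^s * (5*Real.log (1/δ))) := by
      field_simp
      ring
    rw [heq, div_le_iff₀ hD0]
    calc (1:ℝ) ≤ 2*(96:ℝ)^n*(6:ℝ)^s*C*δ^s * (5*Real.log (1/δ)) * (M:ℝ) := hK2
      _ = (M:ℝ) * (2*(96:ℝ)^n*(6:ℝ)^s*C*δ^s * (5*Real.log (1/δ))) := by ring
  refine ⟨(↑Q : Set (EN n)), hQA, hKT, ?_⟩
  calc ENNReal.ofReal ((10*(96:ℝ)^n*(6:ℝ)^s)⁻¹ * δ^(-s) * (Real.log (1/δ))⁻¹ * C⁻¹)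
      ≤ ENNReal.ofReal ((M:ℝ)) := ENNReal.ofReal_le_ofReal hfinR
    _ = ((M:ℕ) : ℝ≥0∞) := ENNReal.ofReal_natCast M
    _ ≤ covNum δ (↑Q : Set (EN n)) := hcovQ
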